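/- Let A be a Noetherian ring, let M be a finitely generated faithful A-module, and let I ⊆ J be ideals of A. If I is a reduction of (J, M), i.e. I • (Jⁿ • M) = J^{n+1} • M for some n, then I is a reduction of the ideal J, i.e. there exists m with I · Jᵐ = J^{m+1}. (Remark following Proposition 3.7.) -/

import Mathlib

open Polynomial

section Aux

variable {A : Type*} [CommRing A]

lemma le_ideal_sum {ι : Type*} {s : Finset ι} {f : ι → Ideal A} {i : ι} (hi : i ∈ s) :
    f i ≤ ∑ j ∈ s, f j := by
  classical
  rw [← Finset.add_sum_erase s f hi, Submodule.add_eq_sup]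
  exact le_sup_left

lemma sum_ideal_le {ι : Type*} {s : Finset ι} {f : ι → Ideal A} {Z : Ideal A}
    (h : ∀ i ∈ s, f i ≤ Z) : ∑ i ∈ s, f i ≤ Z := by
  classical
  induction s using Finset.induction_on with
  | empty => simp
  | insert _ _ hx ih =>
    rw [Finset.sum_insert hx, Submodule.add_eq_sup]
    exact sup_le (h _ (Finset.mem_insert_self _ _))
      (ih fun i hi => h i (Finset.mem_insert_of_mem hi))

lemma ideal_pow_mono {I J : Ideal A} (h : I ≤ J) (k : ℕ) : I ^ k ≤ J ^ k := by
  induction k with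
  | zero => simp
  | succ k ih =>
    rw [pow_succ, pow_succ]
    exact Ideal.mul_mono ih h

lemma ideal_add_pow_le (P Q : Ideal A) (n : ℕ) :
    (P + Q) ^ n ≤ ∑ i ∈ Finset.range (n + 1), P ^ i * Q ^ (n - i) := by
  induction n with
  | zero => simp
  | succ n ih =>
    rw [pow_succ]
    calc (P + Q) ^ n * (P + Q)
        ≤ (∑ i ∈ Finset.range (n + 1), P ^ i * Q ^ (n - i)) * (P + Q) :=
          Ideal.mul_mono ih le_rfl
      _ = ∑ i ∈ Finset.range (n + 1),
            (P ^ i * Q ^ (n - i) * P + P ^ i * Q ^ (n - i) * Q) := by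
          rw [Finset.sum_mul]; exact Finset.sum_congr rfl fun i _ => mul_add _ _ _
      _ ≤ ∑ i ∈ Finset.range (n + 2), P ^ i * Q ^ (n + 1 - i) := by
          apply sum_ideal_le
          intro i hi
          rw [Finset.mem_range] at hi
          have hin : i ≤ n := by omega
          rw [Submodule.add_eq_sup]
          apply sup_le
          · have e : P ^ i * Q ^ (n - i) * P = P ^ (i + 1) * Q ^ (n + 1 - (i + 1)) := by
              have : n + 1 - (i + 1) = n - i := by omega
              rw [this]; ring
            rw [e]
            exact le_ideal_sum (f := fun j => P ^ j * Q ^ (n + 1 - j))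
              (Finset.mem_range.mpr (by omega))
          · have e : P ^ i * Q ^ (n - i) * Q = P ^ i * Q ^ (n + 1 - i) := by
              have : n + 1 - i = (n - i) + 1 := by omega
              rw [this]; ring
            rw [e]
            exact le_ideal_sum (f := fun j => P ^ j * Q ^ (n + 1 - j))
              (Finset.mem_range.mpr (by omega))

/-- Pigeonhole: a high power of a finitely generated ideal is contained in the
sum of the `(E+1)`-st powers of the generators' ideals times a suitable power of `J`. -/
lemma ideal_pigeon {ι : Type*} (K : ι → Ideal A) (J : Ideal A) (E : ℕ) :
    ∀ s : Finset ι, (∀ i ∈ s, K i ≤ J) →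
      (∑ i ∈ s, K i) ^ (s.card * E + 1) ≤
        ∑ i ∈ s, K i ^ (E + 1) * J ^ (s.card * E - E) := by
  classical
  intro s
  induction s using Finset.induction_on with
  | empty => intro _; simp
  | @insert a s ha ih =>
    intro hK
    have hKa : K a ≤ J := hK a (Finset.mem_insert_self a s)
    have hKs : ∀ i ∈ s, K i ≤ J := fun i hi => hK i (Finset.mem_insert_of_mem hi)
    have hT : (∑ i ∈ s, K i) ≤ J := sum_ideal_le hKs
    rw [Finset.card_insert_of_notMem ha, Finset.sum_insert ha, Finset.sum_insert ha]
    set c := s.card with hc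
    set T := ∑ i ∈ s, K i with hTdef
    have hCE : (c + 1) * E = c * E + E := by ring
    have hsub : (c + 1) * E - E = c * E := by
      have : (c + 1) * E = c * E + E := by ring
      omega
    rw [hsub]
    calc (K a + T) ^ ((c + 1) * E + 1)
        ≤ ∑ i ∈ Finset.range ((c + 1) * E + 1 + 1),
            K a ^ i * T ^ ((c + 1) * E + 1 - i) := ideal_add_pow_le _ _ _
      _ ≤ K a ^ (E + 1) * J ^ (c * E) + ∑ i ∈ s, K i ^ (E + 1) * J ^ (c * E) := by
          apply sum_ideal_le
          intro i hi
          rw [Finset.mem_range] at hi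
          have hiN : i ≤ (c + 1) * E + 1 := by omega
          rw [Submodule.add_eq_sup]
          by_cases hiE : E + 1 ≤ i
          · refine le_trans ?_ le_sup_left
            have e1 : i = (E + 1) + (i - (E + 1)) := by omega
            have epow : K a ^ i = K a ^ (E + 1) * K a ^ (i - (E + 1)) := by
              rw [← pow_add, ← e1]
            calc K a ^ i * T ^ ((c + 1) * E + 1 - i)
                = K a ^ (E + 1) * (K a ^ (i - (E + 1)) * T ^ ((c + 1) * E + 1 - i)) := by
                  rw [epow, mul_assoc]
              _ ≤ K a ^ (E + 1) * (J ^ (i - (E + 1)) * J ^ ((c + 1) * E + 1 - i)) :=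
                  Ideal.mul_mono le_rfl
                    (Ideal.mul_mono (ideal_pow_mono hKa _) (ideal_pow_mono hT _))
              _ = K a ^ (E + 1) * J ^ ((i - (E + 1)) + ((c + 1) * E + 1 - i)) := by
                  rw [← pow_add]
              _ = K a ^ (E + 1) * J ^ (c * E) := by
                  have e4 : (i - (E + 1)) + ((c + 1) * E + 1 - i) = c * E := by omega
                  rw [e4]
          · -- i ≤ E, use the induction hypothesis on T
            refine le_trans ?_ le_sup_right
            have hi' : i ≤ E := by omega
            have e2 : (c + 1) * E + 1 - i = (c * E + 1) + (E - i) := by omega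
            have hIH := ih hKs
            calc K a ^ i * T ^ ((c + 1) * E + 1 - i)
                = K a ^ i * (T ^ (c * E + 1) * T ^ (E - i)) := by rw [e2, pow_add]
              _ ≤ J ^ i * ((∑ x ∈ s, K x ^ (E + 1) * J ^ (c * E - E)) * J ^ (E - i)) :=
                  Ideal.mul_mono (ideal_pow_mono hKa _)
                    (Ideal.mul_mono hIH (ideal_pow_mono hT _))
              _ ≤ ∑ x ∈ s, K x ^ (E + 1) * J ^ (c * E) := by
                  rw [Finset.sum_mul, Finset.mul_sum]
                  apply sum_ideal_le
                  intro x hx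
                  have e3 : J ^ i * (K x ^ (E + 1) * J ^ (c * E - E) * J ^ (E - i))
                      = K x ^ (E + 1) * J ^ (i + (c * E - E) + (E - i)) := by
                    rw [pow_add, pow_add]; ring
                  rw [e3]
                  have hle2 : c * E ≤ c * E - E + E := le_tsub_add
                  refine le_trans (Ideal.mul_mono le_rfl (Ideal.pow_le_pow_right ?_))
                    (le_ideal_sum (f := fun x => K x ^ (E + 1) * J ^ (c * E)) hx)
                  omega

/-- Key per-generator bound coming from the Cayley–Hamilton determinant trick. -/
lemma gen_bound {A M : Type*} [CommRing A] [IsNoetherianRing A]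
    [AddCommGroup M] [Module A M] [Module.Finite A M]
    (hfaith : Module.annihilator A M = ⊥)
    (I J : Ideal A) (hIJ : I ≤ J) (n : ℕ)
    (hred : I • (J ^ n • (⊤ : Submodule A M)) = J ^ (n + 1) • (⊤ : Submodule A M))
    (x : A) (hx : x ∈ J) :
    ∃ d : ℕ, Ideal.span {x} ^ (d + 1) * J ^ n ≤ I * J ^ (n + d) := by
  classical
  set N : Submodule A M := J ^ n • ⊤ with hNdef
  haveI : IsNoetherian A M := isNoetherian_of_isNoetherianRing_of_finite A M
  haveI : Module.Finite A N := Module.Finite.iff_fg.mpr (IsNoetherian.noetherian N)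
  set f : Module.End A N := Algebra.lsmul A A N x with hfdef
  have hrange : LinearMap.range f ≤ I • (⊤ : Submodule A N) := by
    rintro _ ⟨v, rfl⟩
    rw [Submodule.mem_smul_top_iff]
    have h1 : x • (v : M) ∈ J ^ (n + 1) • (⊤ : Submodule A M) := by
      rw [pow_succ, mul_comm, mul_smul]
      exact Submodule.smul_mem_smul hx v.2
    rw [← hred] at h1
    exact h1
  obtain ⟨p, (hmonic : p.Monic), -, hcoeff, heval⟩ :=
    LinearMap.exists_monic_and_coeff_mem_pow_and_aeval_eq_zero_of_range_le_smul A f I hrange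
  -- p.eval x kills N
  have hkill : ∀ v : N, (p.eval x) • v = 0 := by
    intro v
    have h2 : aeval f p = Algebra.lsmul A A N (aeval x p) := by
      rw [hfdef, aeval_algHom_apply]
    have h3 : (aeval x p : A) = p.eval x := by
      simp [aeval_def, eval₂_eq_eval_map]
    rw [h3] at h2
    have := congrArg (fun g : Module.End A N => g v) (h2 ▸ heval)
    simpa using this
  -- hence span {p.eval x} * J ^ n = ⊥
  have hzero : ∀ j ∈ J ^ n, p.eval x * j = 0 := by
    have hann : Ideal.span {p.eval x} * J ^ n ≤ Module.annihilator A M := by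
      intro a ha
      rw [Module.mem_annihilator]
      intro m
      have ham : a • m ∈ (Ideal.span {p.eval x} * J ^ n) • (⊤ : Submodule A M) :=
        Submodule.smul_mem_smul ha trivial
      rw [mul_smul] at ham
      have hNzero : Ideal.span {p.eval x} • N = ⊥ := by
        apply le_bot_iff.mp
        rw [Submodule.smul_le]
        intro r hr w hw
        obtain ⟨t, rfl⟩ := Ideal.mem_span_singleton'.mp hr
        have : (t * p.eval x) • (⟨w, hw⟩ : N) = 0 := by
          rw [mul_smul, hkill, smul_zero]
        have := congrArg (Subtype.val) this
        simpa using this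
      rw [← hNdef, hNzero] at ham
      simpa using ham
    intro j hj
    have : p.eval x * j ∈ Ideal.span {p.eval x} * J ^ n :=
      Ideal.mul_mem_mul (Ideal.mem_span_singleton_self _) hj
    have := hann this
    rw [hfaith] at this
    simpa using this
  -- now extract the integral dependence
  rcases Nat.eq_zero_or_pos p.natDegree with hdeg | hdeg
  · -- p = 1, so J ^ n = 0
    have hp1 : p = 1 := hmonic.natDegree_eq_zero.mp hdeg
    have hJn : J ^ n ≤ ⊥ := by
      intro j hj
      have := hzero j hj
      rw [hp1] at this
      simpa using this
    refine ⟨0, ?_⟩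
    have : Ideal.span {x} ^ (0 + 1) * J ^ n ≤ Ideal.span {x} ^ (0 + 1) * ⊥ :=
      Ideal.mul_mono le_rfl hJn
    simpa using le_trans this (by simp)
  · obtain ⟨d, hd⟩ : ∃ d, p.natDegree = d + 1 := ⟨p.natDegree - 1, by omega⟩
    refine ⟨d, ?_⟩
    rw [Ideal.span_singleton_pow]
    apply Ideal.mul_le.mpr
    intro r hr j hj
    obtain ⟨t, rfl⟩ := Ideal.mem_span_singleton'.mp hr
    have key : x ^ (d + 1) * j ∈ I * J ^ (n + d) := by
      have hsum : p.eval x = (∑ i ∈ Finset.range (d + 1), p.coeff i * x ^ i) + x ^ (d + 1) := by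
        rw [eval_eq_sum_range, hd, Finset.sum_range_succ]
        congr 1
        have : p.coeff (d + 1) = 1 := by
          have := hmonic.coeff_natDegree
          rwa [hd] at this
        rw [this, one_mul]
      have h0 := hzero j hj
      rw [hsum, add_mul] at h0
      have hxd : x ^ (d + 1) * j
          = -∑ i ∈ Finset.range (d + 1), p.coeff i * x ^ i * j := by
        rw [← Finset.sum_mul]
        linear_combination h0
      rw [hxd]
      apply neg_mem
      apply Submodule.sum_mem
      intro i hi
      rw [Finset.mem_range] at hi
      have hcoeffi : p.coeff i ∈ I ^ (d - i + 1) := by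
        have := hcoeff i
        have e : p.natDegree - i = d - i + 1 := by omega
        rwa [e] at this
      have hmem : p.coeff i * x ^ i * j ∈ I ^ (d - i + 1) * J ^ i * J ^ n :=
        Ideal.mul_mem_mul (Ideal.mul_mem_mul hcoeffi (Ideal.pow_mem_pow hx i)) hj
      have hle : I ^ (d - i + 1) * J ^ i * J ^ n ≤ I * J ^ (n + d) := by
        have e5 : (d - i) + (i + n) = n + d := by omega
        calc I ^ (d - i + 1) * J ^ i * J ^ n
            = I * I ^ (d - i) * (J ^ i * J ^ n) := by rw [pow_succ]; ring
          _ ≤ I * J ^ (d - i) * (J ^ i * J ^ n) :=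
              Ideal.mul_mono (Ideal.mul_mono le_rfl (ideal_pow_mono hIJ _)) le_rfl
          _ = I * J ^ ((d - i) + (i + n)) := by rw [pow_add, pow_add]; ring
          _ = I * J ^ (n + d) := by rw [e5]
      exact hle hmem
    have : t * x ^ (d + 1) * j = t • (x ^ (d + 1) * j) := by rw [smul_eq_mul]; ring
    rw [this]
    exact Submodule.smul_mem _ t key

end Aux

/-- Remark following Proposition 3.7: if `M` is a finitely generated faithful module
over a Noetherian ring and `I ≤ J` is a reduction of `(J, M)`, then `I` is a
reduction of the ideal `J`. -/
theorem stmt_9 {A M : Type*} [CommRing A] [IsNoetherianRing A]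
    [AddCommGroup M] [Module A M] [Module.Finite A M]
    (hfaith : Module.annihilator A M = ⊥)
    (I J : Ideal A) (hIJ : I ≤ J)
    (hred : ∃ n : ℕ, I • (J ^ n • (⊤ : Submodule A M)) = J ^ (n + 1) • (⊤ : Submodule A M)) :
    ∃ m : ℕ, I * J ^ m = J ^ (m + 1) := by
  classical
  obtain ⟨n, hred⟩ := hred
  obtain ⟨s, hs⟩ : J.FG := IsNoetherian.noetherian J
  have H : ∀ x ∈ s, ∃ d : ℕ, Ideal.span {x} ^ (d + 1) * J ^ n ≤ I * J ^ (n + d) := by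
    intro x hxs
    exact gen_bound hfaith I J hIJ n hred x (hs ▸ Ideal.subset_span hxs)
  -- uniformize the exponents
  have mono : ∀ x ∈ s, ∀ d k : ℕ,
      Ideal.span {x} ^ (d + 1) * J ^ n ≤ I * J ^ (n + d) →
      Ideal.span {x} ^ (d + k + 1) * J ^ n ≤ I * J ^ (n + d + k) := by
    intro x hxs d k hle
    have hxJ : (Ideal.span {x} : Ideal A) ≤ J := by
      rw [Ideal.span_le, Set.singleton_subset_iff]
      exact hs ▸ Ideal.subset_span hxs
    calc Ideal.span {x} ^ (d + k + 1) * J ^ n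
        = Ideal.span {x} ^ k * (Ideal.span {x} ^ (d + 1) * J ^ n) := by
          rw [show d + k + 1 = k + (d + 1) by omega, pow_add]; ring
      _ ≤ J ^ k * (I * J ^ (n + d)) := Ideal.mul_mono (ideal_pow_mono hxJ _) hle
      _ = I * J ^ (n + d + k) := by rw [pow_add]; ring
  let dfun : A → ℕ := fun x => if h : x ∈ s then (H x h).choose else 0
  set D := s.sup dfun with hD
  have hDle : ∀ x ∈ s, Ideal.span {x} ^ (D + 1) * J ^ n ≤ I * J ^ (n + D) := by
    intro x hxs
    have h1 := (H x hxs).choose_spec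
    have hdx : dfun x = (H x hxs).choose := dif_pos hxs
    have h2 : dfun x ≤ D := Finset.le_sup hxs
    have e : D = (H x hxs).choose + (D - (H x hxs).choose) := by omega
    have := mono x hxs _ (D - (H x hxs).choose) h1
    rwa [show (H x hxs).choose + (D - (H x hxs).choose) = D by omega,
      show n + (H x hxs).choose + (D - (H x hxs).choose) = n + D by omega] at this
  -- sum of singleton spans equals J
  have hsumJ : (∑ x ∈ s, Ideal.span {x}) = J := by
    apply le_antisymm
    · apply sum_ideal_le
      intro x hxs
      rw [Ideal.span_le, Set.singleton_subset_iff]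
      exact hs ▸ Ideal.subset_span hxs
    · rw [← hs, Ideal.span_le]
      intro x hxs
      exact le_ideal_sum hxs (Ideal.mem_span_singleton_self x)
  rcases Nat.eq_zero_or_pos s.card with hc | hc
  · -- J = ⊥
    have hsempty : s = ∅ := Finset.card_eq_zero.mp hc
    have hJbot : J = ⊥ := by
      rw [← hsumJ, hsempty]; simp
    refine ⟨0, ?_⟩
    have hIbot : I = ⊥ := le_bot_iff.mp (hJbot ▸ hIJ)
    rw [hIbot, hJbot]
    simp
  · set c := s.card with hcdef
    refine ⟨n + c * D, ?_⟩
    apply le_antisymm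
    · calc I * J ^ (n + c * D) ≤ J * J ^ (n + c * D) := Ideal.mul_mono hIJ le_rfl
        _ = J ^ (n + c * D + 1) := by rw [← pow_succ']
    · have hpig := ideal_pigeon (fun x => Ideal.span {x}) J D s
        (fun x hxs => by
          rw [Ideal.span_le, Set.singleton_subset_iff]
          exact hs ▸ Ideal.subset_span hxs)
      rw [hsumJ] at hpig
      calc J ^ (n + c * D + 1) = J ^ (c * D + 1) * J ^ n := by
            rw [← pow_add]; congr 1; omega
        _ ≤ (∑ x ∈ s, Ideal.span {x} ^ (D + 1) * J ^ (c * D - D)) * J ^ n :=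
            Ideal.mul_mono hpig le_rfl
        _ = ∑ x ∈ s, Ideal.span {x} ^ (D + 1) * J ^ n * J ^ (c * D - D) := by
            rw [Finset.sum_mul]; exact Finset.sum_congr rfl fun x _ => by ring
        _ ≤ I * J ^ (n + c * D) := by
            apply sum_ideal_le
            intro x hxs
            calc Ideal.span {x} ^ (D + 1) * J ^ n * J ^ (c * D - D)
                ≤ I * J ^ (n + D) * J ^ (c * D - D) :=
                  Ideal.mul_mono (hDle x hxs) le_rfl
              _ = I * J ^ ((n + D) + (c * D - D)) := by rw [pow_add]; ring
              _ = I * J ^ (n + c * D) := by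
                  have e6 : (n + D) + (c * D - D) = n + c * D := by
                    obtain ⟨k, hk⟩ : ∃ k, c = k + 1 := ⟨c - 1, by omega⟩
                    rw [hk]
                    have h1 : (k + 1) * D = k * D + D := by ring
                    omega
                  rw [e6]
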